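/- Let G be a DAG with single source and single sink, ordD a topological ordering, and s, t vertices with ordD[s] < ordD[t]. Suppose (i) every vertex v with ordD[s] < ordD[v] ≤ ordD[t] has all its parents u satisfying ordD[u] ≥ ordD[s], i.e., min over these v of OutParent equals ordD[s]; and (ii) every vertex v with ordD[s] ≤ ordD[v] < ordD[t] has all its children u satisfying ordD[u] ≤ ordD[t], i.e., max over these v of OutChild equals ordD[t]. Then t is reachable from s, and the set of vertices reachable from s without passing through t equals the set of vertices from which t is reachable without passing through s, namely the set of all vertices v with ordD[s] ≤ ordD[v] ≤ ordD[t]. -/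

import Mathlib

/-- `v` is reachable from `s` by a directed path whose internal vertices
(all vertices except the endpoints) avoid `avoid`. -/
def ReachWithout {V : Type*} (E : V → V → Prop) (avoid s v : V) : Prop :=
  s = v ∨ ∃ w, Relation.ReflTransGen (fun a b => E a b ∧ b ≠ avoid) s w ∧ E w v

/-- `t` is reachable from `v` by a directed path whose internal vertices avoid `avoid`. -/
def CoReachWithout {V : Type*} (E : V → V → Prop) (avoid v t : V) : Prop :=
  v = t ∨ ∃ w, E v w ∧ Relation.ReflTransGen (fun a b => E a b ∧ a ≠ avoid) w t

/-- The subgraph induced by `U` is acyclic. -/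
def AcyclicOn {V : Type*} (E : V → V → Prop) (U : Set V) : Prop :=
  ∀ v, ¬ Relation.TransGen (fun a b => E a b ∧ a ∈ U ∧ b ∈ U) v v

/-- The directed graph is acyclic. -/
def Acyclic {V : Type*} (E : V → V → Prop) : Prop :=
  ∀ v, ¬ Relation.TransGen E v v

/-- The reachability, matching and acyclicity conditions of a superbubble
(Definition 1, without minimality). -/
def SBCore {V : Type*} (E : V → V → Prop) (s t : V) : Prop :=
  s ≠ t ∧ Relation.TransGen E s t ∧
  (∀ v, ReachWithout E t s v ↔ CoReachWithout E s v t) ∧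
  AcyclicOn E {v | ReachWithout E t s v}

/-- `⟨s, t⟩` is a superbubble: reachability, matching, acyclicity and minimality. -/
def Superbubble {V : Type*} (E : V → V → Prop) (s t : V) : Prop :=
  SBCore E s t ∧ ∀ t', ReachWithout E t s t' → t' ≠ t → ¬ SBCore E s t'

/-- In a DAG with a single source and single sink, if every vertex with order in
(ordD s, ordD t] has all parents of order ≥ ordD s (with ordD s attained), and every
vertex with order in [ordD s, ordD t) has all children of order ≤ ordD t (with ordD t
attained), then t is reachable from s and the set of vertices reachable from s without
passing through t equals the set of vertices from which t is reachable without passing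
through s, namely all vertices with order in [ordD s, ordD t]. -/
theorem validate_superbubble {V : Type*} [Fintype V] (E : V → V → Prop)
    (hA : Acyclic E)
    (hSource : ∃! r : V, ∀ u, ¬ E u r)
    (hSink : ∃! q : V, ∀ u, ¬ E q u)
    (ordD : V → ℕ) (hinj : Function.Injective ordD)
    (htopo : ∀ a b, E a b → ordD a < ordD b)
    (s t : V) (hst : ordD s < ordD t)
    (hParAll : ∀ v u : V, ordD s < ordD v → ordD v ≤ ordD t → E u v → ordD s ≤ ordD u)
    (hParMin : ∃ v u : V, ordD s < ordD v ∧ ordD v ≤ ordD t ∧ E u v ∧ ordD u = ordD s)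
    (hChildAll : ∀ v u : V, ordD s ≤ ordD v → ordD v < ordD t → E v u → ordD u ≤ ordD t)
    (hChildMax : ∃ v u : V, ordD s ≤ ordD v ∧ ordD v < ordD t ∧ E v u ∧ ordD u = ordD t) :
    Relation.TransGen E s t ∧
    {v : V | ReachWithout E t s v} = {v : V | CoReachWithout E s v t} ∧
    {v : V | ReachWithout E t s v} = {v : V | ordD s ≤ ordD v ∧ ordD v ≤ ordD t} := by
  classical
  obtain ⟨r, hr, hrU⟩ := hSource
  obtain ⟨q, hq, hqU⟩ := hSink
  set M := Finset.univ.sup ordD with hM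
  have hMb : ∀ v : V, ordD v ≤ M := fun v => Finset.le_sup (Finset.mem_univ v)
  -- every vertex is reachable from the source r
  have hreach : ∀ v, Relation.ReflTransGen E r v := by
    intro v
    induction' hn : ordD v using Nat.strong_induction_on with n ih generalizing v
    subst hn
    by_cases h : ∃ u, E u v
    · obtain ⟨u, hu⟩ := h
      exact (ih _ (htopo _ _ hu) u rfl).tail hu
    · push_neg at h
      rw [hrU v h]
  -- every vertex reaches the sink q
  have hcoreach : ∀ v, Relation.ReflTransGen E v q := by
    intro v
    induction' hn : M - ordD v using Nat.strong_induction_on with n ih generalizing v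
    by_cases h : ∃ u, E v u
    · obtain ⟨u, hu⟩ := h
      have hlt : M - ordD u < n := by
        have h1 := htopo _ _ hu; have h2 := hMb u; omega
      exact Relation.ReflTransGen.head hu (ih _ hlt u rfl)
    · push_neg at h
      rw [hqU v h]
  have hmono : ∀ a b : V, Relation.ReflTransGen E a b → ordD a ≤ ordD b := by
    intro a b h
    induction h with
    | refl => exact le_refl _
    | tail h1 h2 ih => exact ih.trans (htopo _ _ h2).le
  have hrs : ordD r ≤ ordD s := hmono r s (hreach s)
  have hqt : ordD t ≤ ordD q := hmono t q (hcoreach t)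
  have hpar : ∀ v, ordD s < ordD v → ∃ u, E u v := by
    intro v hv
    by_contra h; push_neg at h
    have hvr := hrU v h
    rw [hvr] at hv; omega
  have hchild : ∀ v, ordD v < ordD t → ∃ u, E v u := by
    intro v hv
    by_contra h; push_neg at h
    have hvq := hqU v h
    rw [hvq] at hv; omega
  -- forward: interval ⊆ ReachWithout
  have hfwd : ∀ v, ordD s ≤ ordD v → ordD v ≤ ordD t → ReachWithout E t s v := by
    intro v
    induction' hn : ordD v using Nat.strong_induction_on with n ih generalizing v
    subst hn
    intro h1 h2
    rcases eq_or_lt_of_le h1 with he | hlt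
    · left; exact hinj he
    · obtain ⟨u, hu⟩ := hpar v hlt
      have hus : ordD s ≤ ordD u := hParAll v u hlt h2 hu
      have huv : ordD u < ordD v := htopo _ _ hu
      have hru : ReachWithout E t s u := ih _ huv u rfl hus (le_of_lt (lt_of_lt_of_le huv h2))
      right
      refine ⟨u, ?_, hu⟩
      have hut : u ≠ t := by intro h; rw [h] at huv; omega
      rcases hru with he | ⟨w, hw, hwu⟩
      · exact he ▸ Relation.ReflTransGen.refl
      · exact hw.tail ⟨hwu, hut⟩
  -- restricted forward paths stay in the interval
  have hpath1 : ∀ w, Relation.ReflTransGen (fun a b => E a b ∧ b ≠ t) s w →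
      ordD s ≤ ordD w ∧ ordD w < ordD t := by
    intro w h
    induction h with
    | refl => exact ⟨le_refl _, hst⟩
    | tail h1 h2 ih =>
      obtain ⟨he, hne⟩ := h2
      have hc := hChildAll _ _ ih.1 ih.2 he
      have hlt : ordD _ < ordD t := lt_of_le_of_ne hc (fun hh => hne (hinj hh))
      exact ⟨ih.1.trans (htopo _ _ he).le, hlt⟩
  have hfwd' : ∀ v, ReachWithout E t s v → ordD s ≤ ordD v ∧ ordD v ≤ ordD t := by
    rintro v (rfl | ⟨w, hw, hwv⟩)
    · exact ⟨le_refl _, hst.le⟩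
    · obtain ⟨h1, h2⟩ := hpath1 w hw
      exact ⟨h1.trans (htopo _ _ hwv).le, hChildAll _ _ h1 h2 hwv⟩
  -- backward: interval ⊆ CoReachWithout
  have hbwd : ∀ v, ordD s ≤ ordD v → ordD v ≤ ordD t → CoReachWithout E s v t := by
    intro v
    induction' hn : M - ordD v using Nat.strong_induction_on with n ih generalizing v
    intro h1 h2
    rcases eq_or_lt_of_le h2 with he | hlt
    · left; exact hinj he
    · obtain ⟨u, hu⟩ := hchild v hlt
      have hut : ordD u ≤ ordD t := hChildAll v u h1 hlt hu
      have hvu := htopo _ _ hu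
      have hmeas : M - ordD u < n := by have := hMb u; omega
      have hcu : CoReachWithout E s u t := ih _ hmeas u rfl (h1.trans hvu.le) hut
      right
      refine ⟨u, hu, ?_⟩
      have hus : u ≠ s := by intro h; rw [h] at hvu; omega
      rcases hcu with rfl | ⟨w, hw, hwt⟩
      · exact Relation.ReflTransGen.refl
      · exact Relation.ReflTransGen.head ⟨hw, hus⟩ hwt
  -- restricted backward paths stay in the interval
  have hpath2 : ∀ w, Relation.ReflTransGen (fun a b => E a b ∧ a ≠ s) w t →
      ordD s < ordD w ∧ ordD w ≤ ordD t := by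
    intro w h
    induction h using Relation.ReflTransGen.head_induction_on with
    | refl => exact ⟨hst, le_refl _⟩
    | head h1 h2 ih =>
      obtain ⟨he, hne⟩ := h1
      have hp := hParAll _ _ ih.1 ih.2 he
      exact ⟨lt_of_le_of_ne hp (fun hh => hne (hinj hh.symm)), ((htopo _ _ he).trans_le ih.2).le⟩
  have hbwd' : ∀ v, CoReachWithout E s v t → ordD s ≤ ordD v ∧ ordD v ≤ ordD t := by
    rintro v (rfl | ⟨w, hvw, hw⟩)
    · exact ⟨hst.le, le_refl _⟩
    · obtain ⟨h1, h2⟩ := hpath2 w hw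
      exact ⟨hParAll w v h1 h2 hvw, ((htopo _ _ hvw).trans_le h2).le⟩
  have hrt : ReachWithout E t s t := hfwd t hst.le (le_refl _)
  have hTG : Relation.TransGen E s t := by
    rcases hrt with he | ⟨w, hw, hwt⟩
    · rw [he] at hst; omega
    · exact Relation.TransGen.tail' (Relation.ReflTransGen.mono (p := E) (fun a b (h : E a b ∧ b ≠ t) => h.1) s w hw) hwt
  refine ⟨hTG, ?_, ?_⟩
  · ext v; simp only [Set.mem_setOf_eq]
    constructor
    · intro h; obtain ⟨h1, h2⟩ := hfwd' v h; exact hbwd v h1 h2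
    · intro h; obtain ⟨h1, h2⟩ := hbwd' v h; exact hfwd v h1 h2
  · ext v; simp only [Set.mem_setOf_eq]
    exact ⟨hfwd' v, fun h => hfwd v h.1 h.2⟩
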